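/- Let R ⊆ S ⊂ Q(R) be a ring extension inside the total quotient ring of R, and let M and N be S-modules with N torsion-free over S. Then every R-linear homomorphism from M to N is S-linear, i.e., Hom_R(M,N) = Hom_S(M,N). -/

import Mathlib

/-- Let `Q(R)` be the total quotient ring of `R` and `S` an intermediate ring
`R ⊆ S ⊆ Q(R)` (realized as an `R`-subalgebra of `Q(R)`).  If `M` and `N` are
`S`-modules and `N` is torsion-free over `S`, then every `R`-linear map
`M → N` is `S`-linear, i.e. `Hom_R(M,N) = Hom_S(M,N)`. -/
theorem hom_eq_of_torsionFree (R : Type*) [CommRing R]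
    (S : Subalgebra R (Localization (nonZeroDivisors R)))
    (M N : Type*) [AddCommGroup M] [AddCommGroup N]
    [Module S M] [Module S N] [Module R M] [Module R N]
    [IsScalarTower R S M] [IsScalarTower R S N]
    (hN : ∀ s : S, s ∈ nonZeroDivisors S → ∀ n : N, s • n = 0 → n = 0)
    (f : M →ₗ[R] N) (s : S) (m : M) : f (s • m) = s • f m := by
  set Q := Localization (nonZeroDivisors R)
  obtain ⟨⟨r, t⟩, ht⟩ := IsLocalization.surj (nonZeroDivisors R) (s : Q)
  -- algebraMap R S t is a nonzerodivisor of S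
  have htS : algebraMap R S (t : R) ∈ nonZeroDivisors S := by
    rw [mem_nonZeroDivisors_iff_right]
    intro x hx
    have hx' : (x : Q) * algebraMap R Q (t : R) = 0 := by
      have := congrArg (Subtype.val) hx
      simpa [mul_comm] using this
    obtain ⟨u, hu⟩ := IsLocalization.map_units Q t
    have hx0 : (x : Q) = 0 := by
      have h2 : (x : Q) = (x : Q) * algebraMap R Q (t : R) * (↑u⁻¹ : Q) := by
        rw [← hu, Units.mul_inv_cancel_right]
      rw [hx', zero_mul] at h2
      exact h2
    exact Subtype.ext (by simpa using hx0)
  have key : algebraMap R S (t : R) * s = algebraMap R S r := by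
    apply Subtype.ext
    have : ((algebraMap R S (t : R) * s : S) : Q) = algebraMap R Q (t : R) * (s : Q) := by
      simp [Algebra.algebraMap_eq_smul_one]
    rw [this, mul_comm, ht]
    simp [Algebra.algebraMap_eq_smul_one]
  rw [← sub_eq_zero]
  apply hN _ htS
  have lhs : algebraMap R S (t : R) • f (s • m) = r • f m := by
    rw [algebraMap_smul, ← map_smul, ← algebraMap_smul S (t : R) (s • m), ← mul_smul, key,
      algebraMap_smul, map_smul]
  have rhs : algebraMap R S (t : R) • (s • f m) = r • f m := by
    rw [← mul_smul, key, algebraMap_smul]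
  rw [smul_sub, lhs, rhs, sub_self]
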